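/- For a computably enumerable set A ⊆ ℕ, the number 2^{−A} is regainingly approximable if and only if there exists a computable enumeration f of A and a computable, nondecreasing, unbounded function r : ℕ → ℕ such that {0,…,n−1} ∩ A ⊆ Enum(f)[r(n)] for infinitely many n. -/

import Mathlib

open Filter

noncomputable section

/-- A real is *regainingly approximable* if some computable nondecreasing rational
sequence converging to it is within `2⁻ⁿ` of it for infinitely many `n`. -/
def RegainApprox (α : ℝ) : Prop :=
  ∃ a : ℕ → ℚ, Computable a ∧ Monotone a ∧
    Tendsto (fun n => (a n : ℝ)) atTop (nhds α) ∧
    ∃ᶠ n in atTop, α - (a n : ℝ) < (2 : ℝ)⁻¹ ^ n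

def LeftComputable (α : ℝ) : Prop :=
  ∃ a : ℕ → ℚ, Computable a ∧ Monotone a ∧
    Tendsto (fun n => (a n : ℝ)) atTop (nhds α)

def ComputableReal (α : ℝ) : Prop :=
  ∃ a : ℕ → ℚ, Computable a ∧ ∀ n, |α - (a n : ℝ)| < (2 : ℝ)⁻¹ ^ n

/-- The real number `2^{-A}`. -/
def realOfSet (A : Set ℕ) : ℝ := ∑' a : A, (2 : ℝ)⁻¹ ^ ((a : ℕ) + 1)

/-- A set is regainingly approximable if it is c.e. and `2^{-A}` is regainingly approximable. -/
def RegainApproxSet (A : Set ℕ) : Prop :=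
  REPred (· ∈ A) ∧ RegainApprox (realOfSet A)

/-- `f` is an enumeration of `A`: `f k = n+1` means `n` is enumerated at stage `k`. -/
def IsEnum (f : ℕ → ℕ) (A : Set ℕ) : Prop := ∀ n, n ∈ A ↔ ∃ k, f k = n + 1

/-- The elements enumerated by `f` before stage `t`. -/
def EnumBy (f : ℕ → ℕ) (t : ℕ) : Set ℕ := {n | ∃ k < t, f k = n + 1}

/-- An enumeration `f` of `A` is `r`-good if for infinitely many `n`, all elements of
`A` below `n` are enumerated before stage `r n`. -/
def RGood (r : ℕ → ℕ) (f : ℕ → ℕ) (A : Set ℕ) : Prop :=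
  ∃ᶠ n in Filter.atTop, ∀ m < n, m ∈ A → m ∈ EnumBy f (r n)


namespace StmtAux
open Encodable

/-! ### Primrec gcd -/

theorem primrecPred_dvd : PrimrecRel ((· ∣ ·) : ℕ → ℕ → Prop) := by
  have : PrimrecRel (fun a b : ℕ => b % a = 0) :=
    Primrec.eq.comp (Primrec.nat_mod.comp Primrec.snd Primrec.fst) (Primrec.const 0)
  exact this.of_eq fun a b => (Nat.dvd_iff_mod_eq_zero).symm

theorem gcd_eq_findGreatest (a b : ℕ) :
    Nat.gcd a b = Nat.findGreatest (fun d => d ∣ a ∧ d ∣ b) (max a b) := by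
  rcases Nat.eq_zero_or_pos (max a b) with h | h
  · have ha : a = 0 := by omega
    have hb : b = 0 := by omega
    subst ha; subst hb; simp
  · symm
    rw [Nat.findGreatest_eq_iff]
    have hg : 0 < Nat.gcd a b := by
      rcases Nat.eq_zero_or_pos a with ha | ha
      · subst ha; simpa using by omega
      · exact Nat.gcd_pos_of_pos_left _ ha
    refine ⟨?_, fun _ => ⟨Nat.gcd_dvd_left _ _, Nat.gcd_dvd_right _ _⟩, fun n hlt hle hn => ?_⟩
    · rcases Nat.eq_zero_or_pos a with ha | ha
      · subst ha; simp only [Nat.gcd_zero_left]; omega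
      · exact le_trans (Nat.le_of_dvd ha (Nat.gcd_dvd_left _ _)) (le_max_left _ _)
    · exact absurd (Nat.le_of_dvd hg (Nat.dvd_gcd hn.1 hn.2)) (by omega)

theorem primrec_gcd : Primrec₂ Nat.gcd := by
  have h : Primrec fun p : ℕ × ℕ =>
      Nat.findGreatest (fun d => d ∣ p.1 ∧ d ∣ p.2) (max p.1 p.2) :=
    Primrec.nat_findGreatest (Primrec.nat_max.comp Primrec.fst Primrec.snd)
      ((primrecPred_dvd.comp Primrec.snd (Primrec.fst.comp Primrec.fst)).and
        (primrecPred_dvd.comp Primrec.snd (Primrec.snd.comp Primrec.fst)))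
  exact (h.of_eq fun p => (gcd_eq_findGreatest p.1 p.2).symm).to₂

/-! ### The concrete rational code -/

/-- natAbs of the integer with given `intEquivNat` code. -/
def nabs (x : ℕ) : ℕ := (x + x % 2) / 2

theorem nabs_intEquivNat (z : ℤ) : nabs (Equiv.intEquivNat z) = z.natAbs := by
  cases z with
  | ofNat n => show nabs (2 * n) = n; unfold nabs; omega
  | negSucc n => show nabs (2 * n + 1) = n + 1; unfold nabs; omega

theorem primrec_nabs : Primrec nabs :=
  (Primrec.nat_div.comp
    (Primrec.nat_add.comp Primrec.id (Primrec.nat_mod.comp Primrec.id (Primrec.const 2)))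
    (Primrec.const 2))

/-- The concrete code of a rational: pair of the integer code of the numerator
and the denominator. -/
def ratCode (q : ℚ) : ℕ := Nat.pair (Equiv.intEquivNat q.num) q.den

theorem ratCode_eq_encode (q : ℚ) : ratCode q = @encode ℚ Rat.instEncodable q := rfl

/-- Membership in the set of valid codes. -/
def Pb (m : ℕ) : Prop := m.unpair.2 ≠ 0 ∧ Nat.Coprime (nabs m.unpair.1) m.unpair.2

instance : DecidablePred Pb := fun _ => by unfold Pb Nat.Coprime; infer_instance

theorem primrecPred_Pb : PrimrecPred Pb := by
  have h1 : PrimrecPred fun m : ℕ => (Nat.unpair m).2 ≠ 0 :=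
    (Primrec.eq.comp (Primrec.snd.comp Primrec.unpair) (Primrec.const 0)).not
  have h2 : PrimrecPred fun m : ℕ =>
      Nat.gcd (nabs (Nat.unpair m).1) (Nat.unpair m).2 = 1 :=
    Primrec.eq.comp
      (primrec_gcd.comp (primrec_nabs.comp (Primrec.fst.comp Primrec.unpair))
        (Primrec.snd.comp Primrec.unpair)) (Primrec.const 1)
  exact (h1.and h2).of_eq fun m => by simp [Pb, Nat.Coprime]

theorem Pb_ratCode (q : ℚ) : Pb (ratCode q) := by
  constructor
  · simp [ratCode, q.den_nz]
  · simp only [ratCode, Nat.unpair_pair, nabs_intEquivNat]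
    exact q.reduced

theorem mem_range_iff_Pb (m : ℕ) : m ∈ Set.range (@encode ℚ Rat.instEncodable) ↔ Pb m := by
  constructor
  · rintro ⟨q, rfl⟩; exact Pb_ratCode q
  · rintro ⟨h1, h2⟩
    refine ⟨Rat.mk' (Equiv.intEquivNat.symm m.unpair.1) m.unpair.2 h1 ?_, ?_⟩
    · have hh := nabs_intEquivNat (Equiv.intEquivNat.symm m.unpair.1)
      rw [Equiv.apply_symm_apply] at hh
      exact hh ▸ h2
    · show Nat.pair (Equiv.intEquivNat (Equiv.intEquivNat.symm m.unpair.1)) m.unpair.2 = m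
      rw [Equiv.apply_symm_apply, Nat.pair_unpair]

/-! ### Counting codes -/

/-- Number of valid codes below `m`. -/
def cnt : ℕ → ℕ
  | 0 => 0
  | m + 1 => cnt m + if Pb m then 1 else 0

theorem primrec_cnt : Primrec cnt := by
  have : Primrec (fun m => Nat.rec (motive := fun _ => ℕ) 0
      (fun k ih => ih + if Pb k then 1 else 0) m) :=
    Primrec.nat_rec' Primrec.id (Primrec.const 0)
      ((Primrec.nat_add.comp (Primrec.snd.comp Primrec.snd)
        (Primrec.ite (primrecPred_Pb.comp (Primrec.fst.comp Primrec.snd))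
          (Primrec.const 1) (Primrec.const 0))).to₂)
  exact this.of_eq fun m => by induction m with
    | zero => rfl
    | succ k ih => simp [cnt, ← ih]

theorem cnt_mono : Monotone cnt := by
  refine monotone_nat_of_le_succ fun m => ?_
  simp only [cnt]; split <;> omega

theorem cnt_lt_cnt {m m' : ℕ} (hm : Pb m) (h : m < m') : cnt m < cnt m' := by
  have h1 : cnt (m + 1) = cnt m + 1 := by simp [cnt, hm]
  have := cnt_mono (show m + 1 ≤ m' from h)
  omega

theorem cnt_inj_on {m m' : ℕ} (hm : Pb m) (hm' : Pb m') (h : cnt m = cnt m') : m = m' := by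
  rcases lt_trichotomy m m' with hl | he | hl
  · exact absurd h (by have := cnt_lt_cnt hm hl; omega)
  · exact he
  · exact absurd h (by have := cnt_lt_cnt hm' hl; omega)

theorem Pb_pair_one (x : ℕ) : Pb (Nat.pair x 1) := by
  constructor <;> simp [Nat.Coprime]

theorem cnt_pair_one (n : ℕ) : n + 1 ≤ cnt (Nat.pair n 1 + 1) := by
  induction n with
  | zero =>
    have h1 : Pb 1 := by have := Pb_pair_one 0; rwa [show Nat.pair 0 1 = 1 from rfl] at this
    show 0 + 1 ≤ cnt (Nat.pair 0 1 + 1)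
    rw [show Nat.pair 0 1 = 1 from rfl]
    simp [cnt, h1]
  | succ k ih =>
    have hlt : Nat.pair k 1 < Nat.pair (k + 1) 1 := Nat.pair_lt_pair_left _ (by omega)
    have h1 : cnt (Nat.pair (k+1) 1 + 1) = cnt (Nat.pair (k+1) 1) + 1 := by
      simp [cnt, Pb_pair_one]
    have h2 := cnt_mono (show Nat.pair k 1 + 1 ≤ Nat.pair (k+1) 1 from hlt)
    omega

theorem exists_code_of_lt_cnt : ∀ B n, n < cnt B → ∃ m < B, Pb m ∧ cnt m = n := by
  intro B
  induction B with
  | zero => intro n h; simp [cnt] at h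
  | succ k ih =>
    intro n h
    by_cases hk : n < cnt k
    · obtain ⟨m, h1, h2, h3⟩ := ih n hk
      exact ⟨m, by omega, h2, h3⟩
    · have hPb : Pb k := by
        by_contra hc
        simp [cnt, hc] at h; omega
      have : cnt (k+1) = cnt k + 1 := by simp [cnt, hPb]
      exact ⟨k, by omega, hPb, by omega⟩

/-- The `n`-th valid code. -/
def nthCode (n : ℕ) : ℕ := Nat.findGreatest (fun m => Pb m ∧ cnt m = n) (Nat.pair n 1)

theorem primrec_nthCode : Primrec nthCode :=
  Primrec.nat_findGreatest (Primrec₂.natPair.comp Primrec.id (Primrec.const 1))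
    ((primrecPred_Pb.comp Primrec.snd).and
      (Primrec.eq.comp (primrec_cnt.comp Primrec.snd) Primrec.fst))


theorem nthCode_eq {n m : ℕ} (hm : Pb m) (hc : cnt m = n) : nthCode n = m := by
  have hbound : m ≤ Nat.pair n 1 := by
    by_contra hgt
    push_neg at hgt
    have h1 := cnt_pair_one n
    have h2 := cnt_mono (show Nat.pair n 1 + 1 ≤ m from hgt)
    omega
  rw [nthCode, Nat.findGreatest_eq_iff]
  refine ⟨hbound, fun _ => ⟨hm, hc⟩, fun k hlt hle ⟨hk1, hk2⟩ => ?_⟩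
  exact absurd (cnt_inj_on hm hk1 (by omega)) (by omega)

/-- The Primcodable-instance encoding of a rational equals the count of valid codes
below its concrete code. -/
theorem encode_rat_eq_cnt (q : ℚ) :
    @encode ℚ Primcodable.toEncodable q = cnt (ratCode q) := by
  have key : @encode ℚ (Primcodable.ofDenumerable ℚ).toEncodable q =
      (List.range (@encode ℚ Rat.instEncodable q)).countP
        (fun k => @decide (k ∈ Set.range (@encode ℚ Rat.instEncodable))
          (Encodable.decidableRangeEncode ℚ k)) := rfl
  have inst : (inferInstance : Primcodable ℚ) = Primcodable.ofDenumerable ℚ := rfl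
  have hpt : ∀ k : ℕ, (@decide (k ∈ Set.range (@encode ℚ Rat.instEncodable))
      (Encodable.decidableRangeEncode ℚ k)) = decide (Pb k) := fun k =>
    decide_eq_decide.2 (mem_range_iff_Pb k)
  have hcnt : ∀ B : ℕ, (List.range B).countP
      (fun k => @decide (k ∈ Set.range (@encode ℚ Rat.instEncodable))
        (Encodable.decidableRangeEncode ℚ k)) = cnt B := by
    intro B
    induction B with
    | zero => rfl
    | succ k ih =>
      rw [List.range_succ, List.countP_append]
      simp only [List.countP_singleton, cnt, ih, hpt k]
      by_cases h : Pb k <;> simp [h]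
  calc @encode ℚ Primcodable.toEncodable q
      = @encode ℚ (Primcodable.ofDenumerable ℚ).toEncodable q := rfl
    _ = cnt (@encode ℚ Rat.instEncodable q) := by rw [key, hcnt]
    _ = cnt (ratCode q) := by rw [ratCode_eq_encode]

theorem nthCode_encode (q : ℚ) :
    nthCode (@encode ℚ Primcodable.toEncodable q) = ratCode q :=
  nthCode_eq (Pb_ratCode q) (encode_rat_eq_cnt q).symm

/-- Transfer: `ratCode` is computable. -/
theorem computable_ratCode : Computable ratCode :=
  ((primrec_nthCode.comp Primrec.encode).of_eq fun q => nthCode_encode q).to_comp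

/-- Transfer: to prove a `ℚ`-valued function computable it suffices to compute its
concrete code. -/
theorem computable_of_ratCode {α : Type*} [Primcodable α] {f : α → ℚ}
    (h : Computable fun a => ratCode (f a)) : Computable f :=
  Computable.encode_iff.1 <|
    (primrec_cnt.to_comp.comp h).of_eq fun a => (encode_rat_eq_cnt (f a)).symm


/-! ### Analysis of `realOfSet` -/

noncomputable def w (m : ℕ) : ℝ := (2:ℝ)⁻¹ ^ (m + 1)

theorem w_nonneg (m : ℕ) : 0 ≤ w m := by simp only [w]; positivity

theorem w_pos (m : ℕ) : 0 < w m := by simp only [w]; positivity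

theorem summable_w : Summable w := by
  have h : Summable (fun n : ℕ => (2:ℝ)⁻¹ * (1/2) ^ n) := summable_geometric_two.mul_left _
  exact h.congr fun n => by simp only [w]; ring

theorem tsum_w : ∑' m, w m = 1 := by
  have : ∑' m : ℕ, w m = (2:ℝ)⁻¹ * ∑' n : ℕ, (1/2) ^ n := by
    rw [← tsum_mul_left]
    exact tsum_congr fun n => by simp only [w]; ring
  rw [this, tsum_geometric_two]; norm_num

theorem realOfSet_eq_tsum_indicator (S : Set ℕ) :
    realOfSet S = ∑' m, S.indicator w m := tsum_subtype S w

theorem summable_indicator_w (S : Set ℕ) : Summable (S.indicator w) :=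
  summable_w.indicator S

theorem realOfSet_nonneg (S : Set ℕ) : 0 ≤ realOfSet S := by
  rw [realOfSet_eq_tsum_indicator]
  exact tsum_nonneg fun m => Set.indicator_nonneg (fun a _ => w_nonneg a) m

theorem realOfSet_mono {S T : Set ℕ} (h : S ⊆ T) : realOfSet S ≤ realOfSet T := by
  rw [realOfSet_eq_tsum_indicator, realOfSet_eq_tsum_indicator]
  exact Summable.tsum_le_tsum (fun m => Set.indicator_le_indicator_of_subset h (fun a => w_nonneg a) m)
    (summable_indicator_w S) (summable_indicator_w T)

theorem realOfSet_union {S T : Set ℕ} (h : Disjoint S T) :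
    realOfSet (S ∪ T) = realOfSet S + realOfSet T := by
  rw [realOfSet_eq_tsum_indicator, realOfSet_eq_tsum_indicator, realOfSet_eq_tsum_indicator,
    Set.indicator_union_of_disjoint h]
  exact Summable.tsum_add (summable_indicator_w S) (summable_indicator_w T)

theorem realOfSet_finset (s : Finset ℕ) : realOfSet ↑s = ∑ m ∈ s, w m := by
  rw [realOfSet]
  exact Finset.tsum_subtype' s w

theorem le_realOfSet {S : Set ℕ} {m : ℕ} (h : m ∈ S) : w m ≤ realOfSet S := by
  rw [realOfSet_eq_tsum_indicator]
  have := Summable.le_tsum (summable_indicator_w S) m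
    (fun j _ => Set.indicator_nonneg (fun a _ => w_nonneg a) j)
  rwa [Set.indicator_of_mem h] at this

theorem realOfSet_tail (n : ℕ) : realOfSet {m | n ≤ m} = (2:ℝ)⁻¹ ^ n := by
  induction n with
  | zero =>
    have : {m : ℕ | 0 ≤ m} = Set.univ := by ext m; simp
    rw [this, realOfSet_eq_tsum_indicator, Set.indicator_univ, tsum_w]; norm_num
  | succ k ih =>
    have hsplit : {m : ℕ | k ≤ m} = ↑({k} : Finset ℕ) ∪ {m | k + 1 ≤ m} := by
      ext m; simp; omega
    have hdisj : Disjoint (↑({k} : Finset ℕ) : Set ℕ) {m | k + 1 ≤ m} := by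
      rw [Set.disjoint_left]; intro m hm hm'; simp at hm hm'; omega
    have := realOfSet_union hdisj
    rw [← hsplit, ih, realOfSet_finset] at this
    simp only [Finset.sum_singleton, w] at this
    have h2 : (2:ℝ)⁻¹ ^ (k+1) = (2:ℝ)⁻¹ ^ k - (2:ℝ)⁻¹ ^ (k+1) := by
      rw [pow_succ]; ring
    linarith

theorem realOfSet_le_tail {S : Set ℕ} {n : ℕ} (h : S ⊆ {m | n ≤ m}) :
    realOfSet S ≤ (2:ℝ)⁻¹ ^ n := by
  rw [← realOfSet_tail n]; exact realOfSet_mono h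

theorem realOfSet_diff {S T : Set ℕ} (h : T ⊆ S) :
    realOfSet S = realOfSet T + realOfSet (S \ T) := by
  rw [← realOfSet_union (Set.disjoint_sdiff_right.mono_left le_rfl)]
  · rw [Set.union_diff_cancel h]


/-! ### Stage sums of an enumeration -/

section EnumSums

variable (f : ℕ → ℕ)

/-- Strict upper bound for values enumerated before stage `t`. -/
def supf : ℕ → ℕ
  | 0 => 0
  | t + 1 => max (supf t) (f t)

theorem le_supf {k t : ℕ} (h : k < t) : f k ≤ supf f t := by
  induction t with
  | zero => omega
  | succ u ih =>
    rcases Nat.lt_succ_iff_lt_or_eq.1 h with h' | h'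
    · exact le_trans (ih h') (le_max_left _ _)
    · subst h'; exact le_max_right _ _

/-- Boolean test for membership in `EnumBy f t`. -/
def membB (t m : ℕ) : Bool :=
  Nat.rec false (fun k ih => ih || decide (f k = m + 1)) t

theorem membB_iff {t m : ℕ} : membB f t m = true ↔ m ∈ EnumBy f t := by
  induction t with
  | zero => simp [membB, EnumBy]
  | succ u ih =>
    show (membB f u m || decide (f u = m + 1)) = true ↔ _
    rw [Bool.or_eq_true, decide_eq_true_iff, ih]
    constructor
    · rintro (⟨k, hk, hfk⟩ | h)
      · exact ⟨k, by omega, hfk⟩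
      · exact ⟨u, by omega, h⟩
    · rintro ⟨k, hk, hfk⟩
      rcases Nat.lt_succ_iff_lt_or_eq.1 hk with h' | h'
      · exact Or.inl ⟨k, h', hfk⟩
      · subst h'; exact Or.inr hfk

/-- `EnumBy f t` as a finset. -/
def eFinset (t : ℕ) : Finset ℕ :=
  (Finset.range (supf f t)).filter fun m => membB f t m = true

theorem coe_eFinset (t : ℕ) : (↑(eFinset f t) : Set ℕ) = EnumBy f t := by
  ext m
  simp only [eFinset, Finset.coe_filter, Finset.mem_range, Set.mem_setOf_eq, membB_iff]
  constructor
  · rintro ⟨_, h⟩; exact h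
  · rintro ⟨k, hk, hfk⟩
    refine ⟨?_, ⟨k, hk, hfk⟩⟩
    have := le_supf f hk
    omega

theorem EnumBy_mono {t t' : ℕ} (h : t ≤ t') : EnumBy f t ⊆ EnumBy f t' := by
  rintro m ⟨k, hk, hfk⟩; exact ⟨k, by omega, hfk⟩

/-- Numerator of the stage sum over `2 ^ supf f t`. -/
def Nval (t : ℕ) : ℕ :=
  Nat.rec 0 (fun m ih => ih + if membB f t m = true then 2 ^ (supf f t - (m + 1)) else 0)
    (supf f t)

theorem rec_sum_eq (g : ℕ → ℕ) (B : ℕ) :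
    (Nat.rec 0 (fun m ih => ih + g m) B : ℕ) = ∑ m ∈ Finset.range B, g m := by
  induction B with
  | zero => simp
  | succ k ih => rw [Finset.sum_range_succ, ← ih]

theorem Nval_eq_sum (t : ℕ) : Nval f t =
    ∑ m ∈ Finset.range (supf f t),
      if membB f t m = true then 2 ^ (supf f t - (m + 1)) else 0 :=
  rec_sum_eq _ _

/-- The stage sum as a rational. -/
def aq (t : ℕ) : ℚ := mkRat (Nval f t) (2 ^ supf f t)

theorem aq_cast (t : ℕ) : ((aq f t : ℚ) : ℝ) = realOfSet (EnumBy f t) := by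
  have hb : ((2:ℝ) ^ supf f t) ≠ 0 := by positivity
  have h1 : ((aq f t : ℚ) : ℝ) = (Nval f t : ℝ) / 2 ^ supf f t := by
    rw [aq, Rat.mkRat_eq_div]
    push_cast
    norm_num
  rw [h1, ← coe_eFinset, realOfSet_finset, eFinset, Finset.sum_filter, Nval_eq_sum]
  push_cast
  rw [Finset.sum_div]
  refine Finset.sum_congr rfl fun m hm => ?_
  rw [Finset.mem_range] at hm
  by_cases h : membB f t m = true
  · simp only [h, if_true]
    have hex : supf f t - (m + 1) + (m + 1) = supf f t := by omega
    rw [w, inv_pow, div_eq_iff hb, inv_mul_eq_div,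
      eq_div_iff (pow_ne_zero _ (two_ne_zero (α := ℝ))), ← pow_add, hex]
  · simp [h]

theorem ratCode_mkRat_nat (N b : ℕ) (hb : b ≠ 0) :
    ratCode (mkRat (N : ℤ) b) = Nat.pair (2 * (N / N.gcd b)) (b / N.gcd b) := by
  have h := (Rat.normalize_eq_mkRat (num := (N:ℤ)) (den := b) hb).symm
  rw [h, Rat.normalize_eq hb, ratCode]
  simp only [Int.natAbs_natCast]
  congr 1

theorem computable_supf (hf : Computable f) : Computable (supf f) := by
  have : Computable fun t : ℕ =>
      Nat.rec (motive := fun _ => ℕ) 0 (fun y IH => max IH (f y)) t :=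
    Computable.nat_rec Computable.id (Computable.const 0)
      ((Primrec.nat_max.to_comp.comp (Computable.snd.comp Computable.snd)
        (hf.comp (Computable.fst.comp Computable.snd))).to₂)
  exact this.of_eq fun t => by
    induction t with
    | zero => rfl
    | succ u ih =>
      show max (Nat.rec 0 (fun y IH => max IH (f y)) u) (f u) = max (supf f u) (f u)
      rw [ih]

theorem computable_membB (hf : Computable f) : Computable₂ (membB f) := by
  have : Computable fun p : ℕ × ℕ =>
      Nat.rec (motive := fun _ => Bool) false
        (fun k ih => ih || decide (f k = p.2 + 1)) p.1 :=
    Computable.nat_rec Computable.fst (Computable.const false)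
      (((Primrec.or.to_comp).comp (Computable.snd.comp Computable.snd)
        ((Primrec.eq.decide.to_comp).comp (hf.comp (Computable.fst.comp Computable.snd))
          (Computable.succ.comp (Computable.snd.comp Computable.fst)))).to₂)
  exact (this.of_eq fun p => rfl).to₂

theorem computable_pow2 : Computable fun e : ℕ => 2 ^ e := by
  have : Computable fun e : ℕ =>
      Nat.rec (motive := fun _ => ℕ) 1 (fun _ IH => 2 * IH) e :=
    Computable.nat_rec Computable.id (Computable.const 1)
      ((Primrec.nat_mul.to_comp.comp (Computable.const 2)
        (Computable.snd.comp Computable.snd)).to₂)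
  exact this.of_eq fun e => by
    induction e with
    | zero => rfl
    | succ u ih => show 2 * _ = _; rw [ih, pow_succ]; ring

theorem computable_Nval (hf : Computable f) : Computable (Nval f) := by
  have hsup := computable_supf f hf
  have hm := computable_membB f hf
  have : Computable fun t : ℕ =>
      Nat.rec (motive := fun _ => ℕ) 0
        (fun m ih => ih + bif membB f t m then 2 ^ (supf f t - Nat.succ m) else 0)
        (supf f t) :=
    Computable.nat_rec hsup (Computable.const 0)
      ((Primrec.nat_add.to_comp.comp (Computable.snd.comp Computable.snd)
        (Computable.cond
          (hm.comp Computable.fst (Computable.fst.comp Computable.snd))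
          (computable_pow2.comp (Primrec.nat_sub.to_comp.comp (hsup.comp Computable.fst)
            (Computable.succ.comp (Computable.fst.comp Computable.snd))))
          (Computable.const 0))).to₂)
  exact this.of_eq fun t => by
    rw [Nval]
    congr 1
    funext m ih
    by_cases h : membB f t m = true
    · simp [h]
    · rw [Bool.not_eq_true] at h; simp [h]

theorem computable_aq (hf : Computable f) : Computable (aq f) := by
  apply computable_of_ratCode
  have hN := computable_Nval f hf
  have hb := computable_pow2.comp (computable_supf f hf)
  have hg : Computable fun t => Nat.gcd (Nval f t) (2 ^ supf f t) :=
    primrec_gcd.to_comp.comp hN hb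
  have : Computable fun t =>
      Nat.pair (2 * (Nval f t / Nat.gcd (Nval f t) (2 ^ supf f t)))
        (2 ^ supf f t / Nat.gcd (Nval f t) (2 ^ supf f t)) :=
    Primrec₂.natPair.to_comp.comp
      (Primrec.nat_mul.to_comp.comp (Computable.const 2)
        (Primrec.nat_div.to_comp.comp hN hg))
      (Primrec.nat_div.to_comp.comp hb hg)
  exact this.of_eq fun t =>
    (ratCode_mkRat_nat (Nval f t) (2 ^ supf f t) (by positivity)).symm

end EnumSums


/-! ### A computable enumeration of a c.e. set -/

theorem exists_enum {A : Set ℕ} (hA : REPred (· ∈ A)) :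
    ∃ f : ℕ → ℕ, Computable f ∧ IsEnum f A := by
  have h1 : Partrec fun n : ℕ => Part.assert (n ∈ A) fun _ => Part.some () := hA
  have h2 : Partrec fun n : ℕ =>
      (Part.assert (n ∈ A) fun _ => Part.some ()).map fun _ => (0 : ℕ) :=
    h1.map (((Computable.const (0 : ℕ)).comp Computable.fst).to₂)
  have hdom : ∀ n : ℕ,
      ((Part.assert (n ∈ A) fun _ => Part.some ()).map fun _ => (0:ℕ)).Dom ↔ n ∈ A := by
    intro n
    by_cases h : n ∈ A
    · simp [Part.assert_pos h, h]
    · simp [Part.assert_neg h, h]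
  obtain ⟨c, hc⟩ := Nat.Partrec.Code.exists_code.1 (Partrec.nat_iff.1 h2)
  classical
  refine ⟨fun m => if (Nat.Partrec.Code.evaln m.unpair.1 c m.unpair.2).isSome
    then m.unpair.2 + 1 else 0, ?_, ?_⟩
  · have hev : Primrec fun m : ℕ =>
        Nat.Partrec.Code.evaln m.unpair.1 c m.unpair.2 :=
      Nat.Partrec.Code.primrec_evaln.comp
        (((Primrec.fst.comp Primrec.unpair).pair (Primrec.const c)).pair
          (Primrec.snd.comp Primrec.unpair))
    exact (Primrec.ite (Primrec.eq.comp (Primrec.option_isSome.comp hev) (Primrec.const true))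
      (Primrec.succ.comp (Primrec.snd.comp Primrec.unpair)) (Primrec.const 0)).to_comp
  · intro n
    constructor
    · intro hn
      have hd : (c.eval n).Dom := by rw [hc]; exact (hdom n).2 hn
      obtain ⟨s, hs⟩ := Nat.Partrec.Code.evaln_complete.1 (Part.get_mem hd)
      refine ⟨Nat.pair s n, ?_⟩
      have : (Nat.Partrec.Code.evaln s c n).isSome = true :=
        Option.isSome_iff_exists.2 ⟨_, hs⟩
      simp [Nat.unpair_pair, this]
    · rintro ⟨k, hk⟩
      simp only at hk
      by_cases hs : (Nat.Partrec.Code.evaln k.unpair.1 c k.unpair.2).isSome = true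
      · rw [if_pos hs] at hk
        have hn2 : k.unpair.2 = n := by omega
        obtain ⟨v, hv⟩ := Option.isSome_iff_exists.1 hs
        have := Nat.Partrec.Code.evaln_sound hv
        rw [hn2] at this
        have hd : (c.eval n).Dom := Part.dom_iff_mem.2 ⟨v, this⟩
        rw [hc] at hd
        exact (hdom n).1 hd
      · rw [if_neg hs] at hk; omega

/-! ### Convergence of stage sums -/

section Convergence

variable {A : Set ℕ} {f : ℕ → ℕ} (hfE : IsEnum f A)
include hfE

theorem EnumBy_subset (t : ℕ) : EnumBy f t ⊆ A := by
  rintro m ⟨k, _, hk⟩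
  exact (hfE m).2 ⟨k, hk⟩

theorem exists_stage (M : ℕ) : ∃ T, ∀ m < M, m ∈ A → m ∈ EnumBy f T := by
  induction M with
  | zero => exact ⟨0, by omega⟩
  | succ M ih =>
    obtain ⟨T, hT⟩ := ih
    by_cases hM : M ∈ A
    · obtain ⟨k, hk⟩ := (hfE M).1 hM
      refine ⟨max T (k + 1), fun m hm hmA => ?_⟩
      rcases Nat.lt_succ_iff_lt_or_eq.1 hm with h | h
      · exact EnumBy_mono f (le_max_left _ _) (hT m h hmA)
      · subst h; exact ⟨k, by omega, hk⟩
    · refine ⟨T, fun m hm hmA => ?_⟩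
      rcases Nat.lt_succ_iff_lt_or_eq.1 hm with h | h
      · exact hT m h hmA
      · subst h; exact absurd hmA hM

theorem diff_tail {t M T : ℕ} (hT : ∀ m < M, m ∈ A → m ∈ EnumBy f T) (htT : T ≤ t) :
    A \ EnumBy f t ⊆ {m | M ≤ m} := by
  rintro m ⟨hmA, hmE⟩
  rw [Set.mem_setOf_eq]
  by_contra h
  push_neg at h
  exact hmE (EnumBy_mono f htT (hT m h hmA))

theorem tendsto_stage_sums :
    Filter.Tendsto (fun t => realOfSet (EnumBy f t)) Filter.atTop (nhds (realOfSet A)) := by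
  rw [Metric.tendsto_atTop]
  intro ε hε
  obtain ⟨M, hM⟩ := exists_pow_lt_of_lt_one hε (by norm_num : (2:ℝ)⁻¹ < 1)
  obtain ⟨T, hT⟩ := exists_stage hfE M
  refine ⟨T, fun t ht => ?_⟩
  have hsub := EnumBy_subset hfE t
  have hdiff := realOfSet_diff (S := A) hsub
  have htail : realOfSet (A \ EnumBy f t) ≤ (2:ℝ)⁻¹ ^ M :=
    realOfSet_le_tail (diff_tail hfE hT ht)
  have hnn := realOfSet_nonneg (A \ EnumBy f t)
  rw [Real.dist_eq, abs_of_nonpos (by linarith)]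
  linarith

end Convergence


/-! ### Good enumeration implies regainingly approximable -/

theorem pow_half_succ_lt (n : ℕ) : (2:ℝ)⁻¹ ^ (n + 1) < (2:ℝ)⁻¹ ^ n := by
  have h : (0:ℝ) < 2⁻¹ ^ n := by positivity
  rw [pow_succ]
  nlinarith

theorem regain_of_enum {A : Set ℕ} {f r : ℕ → ℕ} (hfC : Computable f) (hfE : IsEnum f A)
    (hrC : Computable r) (hrM : Monotone r) (hrU : ∀ c : ℕ, ∃ n, c < r n)
    (hG : RGood r f A) : RegainApprox (realOfSet A) := by
  refine ⟨fun n => aq f (r (n + 1)), (computable_aq f hfC).comp (hrC.comp Computable.succ),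
    ?_, ?_, ?_⟩
  · -- monotone
    intro n m hnm
    have h := realOfSet_mono (EnumBy_mono f (hrM (by omega : n + 1 ≤ m + 1)))
    rw [← aq_cast, ← aq_cast] at h
    exact_mod_cast h
  · -- tendsto
    have hcomp : Filter.Tendsto (fun n => r (n + 1)) Filter.atTop Filter.atTop := by
      rw [Filter.tendsto_atTop]
      intro b
      obtain ⟨n₀, hn₀⟩ := hrU b
      rw [Filter.eventually_atTop]
      exact ⟨n₀, fun n hn => le_trans (le_of_lt hn₀) (hrM (by omega))⟩
    have := (tendsto_stage_sums hfE).comp hcomp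
    refine this.congr fun n => ?_
    rw [Function.comp_apply, aq_cast]
  · -- frequently
    rw [Filter.frequently_atTop]
    intro N
    obtain ⟨n', hn'N, hgood⟩ := Filter.frequently_atTop.1 hG (N + 1)
    obtain ⟨n, rfl⟩ : ∃ n, n' = n + 1 := ⟨n' - 1, by omega⟩
    refine ⟨n, by omega, ?_⟩
    rw [aq_cast]
    have hsub := EnumBy_subset hfE (r (n + 1))
    have hdiff := realOfSet_diff (S := A) hsub
    have htail : realOfSet (A \ EnumBy f (r (n + 1))) ≤ (2:ℝ)⁻¹ ^ (n + 1) := by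
      refine realOfSet_le_tail ?_
      rintro m ⟨hmA, hmE⟩
      rw [Set.mem_setOf_eq]
      by_contra h
      push_neg at h
      exact hmE (hgood m h hmA)
    have := pow_half_succ_lt n
    linarith


/-! ### Regainingly approximable implies good enumeration -/

theorem realOfSet_EnumBy_eq_div (f : ℕ → ℕ) (t : ℕ) :
    realOfSet (EnumBy f t) = (Nval f t : ℝ) / 2 ^ supf f t := by
  rw [← aq_cast, aq, Rat.mkRat_eq_div]
  push_cast
  norm_num

/-- The search condition: the stage-`t` sum exceeds `a n - 2⁻¹ ^ n`. -/
def condB (a : ℕ → ℚ) (f : ℕ → ℕ) (n t : ℕ) : Bool :=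
  decide ((ratCode (a n)).unpair.1 % 2 = 1) ||
    decide ((ratCode (a n)).unpair.1 / 2 * 2 ^ (supf f t + n)
      < (Nval f t * 2 ^ n + 2 ^ supf f t) * (ratCode (a n)).unpair.2)

theorem condB_iff (a : ℕ → ℚ) (f : ℕ → ℕ) (n t : ℕ) :
    condB a f n t = true ↔ ((a n : ℚ) : ℝ) - (2:ℝ)⁻¹ ^ n < realOfSet (EnumBy f t) := by
  have hB : (0:ℝ) < 2 ^ supf f t := by positivity
  have hK : (0:ℝ) < 2 ^ (supf f t + n) := by positivity
  have hden : (0:ℝ) < ((a n).den : ℝ) := by exact_mod_cast (a n).pos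
  have hC : ((Nval f t * 2 ^ n + 2 ^ supf f t : ℕ) : ℝ) / 2 ^ (supf f t + n)
      = (Nval f t : ℝ) / 2 ^ supf f t + (2:ℝ)⁻¹ ^ n := by
    push_cast
    rw [pow_add, inv_pow]
    field_simp
  have key : (((a n : ℚ) : ℝ) - (2:ℝ)⁻¹ ^ n < realOfSet (EnumBy f t)) ↔
      ((a n).num : ℝ) * 2 ^ (supf f t + n)
        < ((Nval f t * 2 ^ n + 2 ^ supf f t : ℕ) : ℝ) * ((a n).den : ℝ) := by
    rw [realOfSet_EnumBy_eq_div, sub_lt_iff_lt_add, ← hC, Rat.cast_def,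
      div_lt_div_iff₀ hden hK]
  rw [key, condB]
  have hcode1 : (ratCode (a n)).unpair.1 = Equiv.intEquivNat (a n).num := by
    rw [ratCode, Nat.unpair_pair]
  have hcode2 : (ratCode (a n)).unpair.2 = (a n).den := by
    rw [ratCode, Nat.unpair_pair]
  rw [hcode1, hcode2]
  have hCpos : 0 < Nval f t * 2 ^ n + 2 ^ supf f t := by positivity
  cases hnum : (a n).num with
  | ofNat k =>
    have h1 : Equiv.intEquivNat (Int.ofNat k) = 2 * k := rfl
    rw [h1]
    have h2 : ¬ (2 * k % 2 = 1) := by omega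
    have h3 : 2 * k / 2 = k := by omega
    simp only [h2, decide_false, Bool.false_or, h3, decide_eq_true_iff]
    rw [show ((Int.ofNat k : ℤ) : ℝ) = (k : ℝ) by push_cast; rfl]
    constructor
    · intro h
      exact_mod_cast h
    · intro h
      exact_mod_cast h
  | negSucc k =>
    have h1 : Equiv.intEquivNat (Int.negSucc k) = 2 * k + 1 := rfl
    rw [h1]
    have h2 : (2 * k + 1) % 2 = 1 := by omega
    simp only [h2, decide_true, Bool.true_or, true_iff]
    have hneg : ((Int.negSucc k : ℤ) : ℝ) < 0 := by
      rw [Int.cast_negSucc]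
      push_cast
      have : (0:ℝ) < (k:ℝ) + 1 := by positivity
      linarith
    have hpos : (0:ℝ) < ((Nval f t * 2 ^ n + 2 ^ supf f t : ℕ) : ℝ) * ((a n).den : ℝ) := by
      apply mul_pos _ hden
      exact_mod_cast hCpos
    nlinarith

theorem computable_condB {a : ℕ → ℚ} {f : ℕ → ℕ} (ha : Computable a) (hf : Computable f) :
    Computable₂ (condB a f) := by
  have hcode : Computable fun p : ℕ × ℕ => ratCode (a p.1) :=
    computable_ratCode.comp (ha.comp Computable.fst)
  have hi : Computable fun p : ℕ × ℕ => (ratCode (a p.1)).unpair.1 :=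
    (Primrec.fst.comp Primrec.unpair).to_comp.comp hcode
  have hd : Computable fun p : ℕ × ℕ => (ratCode (a p.1)).unpair.2 :=
    (Primrec.snd.comp Primrec.unpair).to_comp.comp hcode
  have hsup : Computable fun p : ℕ × ℕ => supf f p.2 :=
    (computable_supf f hf).comp Computable.snd
  have hN : Computable fun p : ℕ × ℕ => Nval f p.2 :=
    (computable_Nval f hf).comp Computable.snd
  have hleft : Computable fun p : ℕ × ℕ => decide ((ratCode (a p.1)).unpair.1 % 2 = 1) :=
    Primrec.eq.decide.to_comp.comp (Primrec.nat_mod.to_comp.comp hi (Computable.const 2))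
      (Computable.const 1)
  have hlhs : Computable fun p : ℕ × ℕ =>
      (ratCode (a p.1)).unpair.1 / 2 * 2 ^ (supf f p.2 + p.1) :=
    Primrec.nat_mul.to_comp.comp
      (Primrec.nat_div.to_comp.comp hi (Computable.const 2))
      (computable_pow2.comp (Primrec.nat_add.to_comp.comp hsup Computable.fst))
  have hrhs : Computable fun p : ℕ × ℕ =>
      (Nval f p.2 * 2 ^ p.1 + 2 ^ supf f p.2) * (ratCode (a p.1)).unpair.2 :=
    Primrec.nat_mul.to_comp.comp
      (Primrec.nat_add.to_comp.comp
        (Primrec.nat_mul.to_comp.comp hN (computable_pow2.comp Computable.fst))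
        (computable_pow2.comp hsup))
      hd
  have hright : Computable fun p : ℕ × ℕ => decide
      ((ratCode (a p.1)).unpair.1 / 2 * 2 ^ (supf f p.2 + p.1)
        < (Nval f p.2 * 2 ^ p.1 + 2 ^ supf f p.2) * (ratCode (a p.1)).unpair.2) :=
    Primrec.nat_lt.decide.to_comp.comp hlhs hrhs
  exact (Primrec.or.to_comp.comp hleft hright).to₂

theorem mem_rfindOpt_of {g : ℕ → Option ℕ} {t0 : ℕ} (h : g t0 = some t0)
    (hmin : ∀ k < t0, g k = none) : t0 ∈ Nat.rfindOpt g := by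
  have h1 : t0 ∈ Nat.rfind fun k => (Part.some ((g k).isSome) : Part Bool) := by
    apply Nat.mem_rfind.2
    constructor
    · simp [h]
    · intro m hm
      simp [hmin m hm]
  rw [Nat.rfindOpt]
  apply Part.mem_bind_iff.2
  refine ⟨t0, h1, ?_⟩
  simp [h]

theorem computable_find {p : ℕ → ℕ → Bool} (hp : Computable₂ p)
    (hex : ∀ n, ∃ t, p n t = true) :
    Computable fun n => Nat.find (hex n) := by
  have hF : Computable₂ fun (n t : ℕ) => bif p n t then some t else none :=
    (Computable.cond (hp.comp Computable.fst Computable.snd)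
      (Computable.option_some.comp Computable.snd) (Computable.const none)).to₂
  have hpart := Partrec.rfindOpt hF
  apply Partrec.of_eq_tot hpart
  intro n
  apply mem_rfindOpt_of
  · rw [Nat.find_spec (hex n)]
    rfl
  · intro k hk
    have := Nat.find_min (hex n) hk
    rw [Bool.not_eq_true] at this
    rw [this]
    rfl

theorem enum_of_regain {A : Set ℕ} (hA : REPred (· ∈ A))
    (h : RegainApprox (realOfSet A)) :
    ∃ f r : ℕ → ℕ, Computable f ∧ IsEnum f A ∧
      Computable r ∧ Monotone r ∧ (∀ c : ℕ, ∃ n, c < r n) ∧ RGood r f A := by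
  obtain ⟨a, haC, haM, haT, haF⟩ := h
  obtain ⟨f, hfC, hfE⟩ := exists_enum hA
  have haMR : Monotone fun n => ((a n : ℚ) : ℝ) := fun n m hnm => by
    show ((a n : ℚ) : ℝ) ≤ ((a m : ℚ) : ℝ)
    exact_mod_cast haM hnm
  have hle : ∀ n, ((a n : ℚ) : ℝ) ≤ realOfSet A := fun n => haMR.ge_of_tendsto haT n
  have hex : ∀ n, ∃ t, condB a f n t = true := by
    intro n
    have hpow : (0:ℝ) < (2:ℝ)⁻¹ ^ n := by positivity
    have hlt : ((a n : ℚ) : ℝ) - (2:ℝ)⁻¹ ^ n < realOfSet A := by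
      have := hle n; linarith
    obtain ⟨t, ht⟩ := ((tendsto_stage_sums hfE).eventually (lt_mem_nhds hlt)).exists
    exact ⟨t, (condB_iff a f n t).2 ht⟩
  have hr0C : Computable fun n => Nat.find (hex n) :=
    computable_find (computable_condB haC hfC) hex
  have hr0M : ∀ {n m : ℕ}, n ≤ m → Nat.find (hex n) ≤ Nat.find (hex m) := by
    intro n m hnm
    apply Nat.find_min'
    have hspec := (condB_iff a f m _).1 (Nat.find_spec (hex m))
    apply (condB_iff a f n _).2
    have h1 : ((a n : ℚ) : ℝ) ≤ ((a m : ℚ) : ℝ) := haMR hnm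
    have h2 : (2:ℝ)⁻¹ ^ m ≤ (2:ℝ)⁻¹ ^ n :=
      pow_le_pow_of_le_one (by norm_num) (by norm_num) hnm
    linarith
  refine ⟨f, fun N => max (Nat.find (hex (N + 1))) N, hfC, hfE, ?_, ?_, ?_, ?_⟩
  · exact Primrec.nat_max.to_comp.comp (hr0C.comp Computable.succ) Computable.id
  · intro N M hNM
    exact max_le_max (hr0M (by omega)) hNM
  · intro c
    refine ⟨c + 1, ?_⟩
    show c < max (Nat.find (hex (c + 1 + 1))) (c + 1)
    have := le_max_right (Nat.find (hex (c + 1 + 1))) (c + 1)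
    omega
  · rw [RGood, Filter.frequently_atTop]
    intro N₀
    obtain ⟨n, hnge, hn⟩ := Filter.frequently_atTop.1 haF (N₀ + 2)
    obtain ⟨N, rfl⟩ : ∃ N, n = N + 1 := ⟨n - 1, by omega⟩
    refine ⟨N, by omega, ?_⟩
    intro m hm hmA
    have hrle : Nat.find (hex (N + 1)) ≤ max (Nat.find (hex (N + 1))) N := le_max_left _ _
    refine EnumBy_mono f hrle ?_
    by_contra hmE
    have hspec := (condB_iff a f (N + 1) _).1 (Nat.find_spec (hex (N + 1)))
    have hdiff := realOfSet_diff (EnumBy_subset hfE (Nat.find (hex (N + 1))))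
    have hwm : w m ≤ realOfSet (A \ EnumBy f (Nat.find (hex (N + 1)))) :=
      le_realOfSet ⟨hmA, hmE⟩
    have hwpow : (2:ℝ)⁻¹ ^ N ≤ w m := by
      rw [w]
      exact pow_le_pow_of_le_one (by norm_num) (by norm_num) (by omega)
    have h2 : (2:ℝ)⁻¹ ^ (N + 1) + (2:ℝ)⁻¹ ^ (N + 1) = (2:ℝ)⁻¹ ^ N := by
      rw [pow_succ]; ring
    linarith

end StmtAux

/-- For a c.e. set `A`, `2^{-A}` is regainingly approximable iff `A` has a computable
enumeration that is `r`-good for some computable nondecreasing unbounded `r`. -/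
theorem stmt_8 (A : Set ℕ) (hA : REPred (· ∈ A)) :
    RegainApprox (realOfSet A) ↔
      ∃ f r : ℕ → ℕ, Computable f ∧ IsEnum f A ∧
        Computable r ∧ Monotone r ∧ (∀ c : ℕ, ∃ n, c < r n) ∧ RGood r f A := by
  constructor
  · exact fun h => StmtAux.enum_of_regain hA h
  · rintro ⟨f, r, hfC, hfE, hrC, hrM, hrU, hG⟩
    exact StmtAux.regain_of_enum hfC hfE hrC hrM hrU hG
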